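/- arXiv:0804.4454 — 3 statements merged into one kernel-verified Lean document; each statement's English description precedes it below -/
import Mathlib

section
/- For all continuous compactly supported f₁, f₂ : G → ℂ, N^ρ(f₁ ⋆ f₂) ≤ N^ρ(f₁)·N^ρ(f₂); that is, the twisted norm N^ρ obtained from an unconditional norm N is again submultiplicative for convolution (so B^ρ(G) is an unconditional completion of C_c(G)). -/
open MeasureTheory

private theorem key_unif {G : Type*} [Group G] [TopologicalSpace G] [IsTopologicalGroup G]
    (b : G → ℂ) (hb : Continuous b) (hbc : HasCompactSupport b) {ε : ℝ} (hε : 0 < ε) :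
    ∃ U ∈ nhds (1 : G), ∀ x y : G, x⁻¹ * y ∈ U → dist (b x) (b y) < ε := by
  letI : UniformSpace G := IsTopologicalGroup.rightUniformSpace G
  have hb' : Continuous fun x : G => b x⁻¹ := hb.comp continuous_inv
  have hbc' : HasCompactSupport fun x : G => b x⁻¹ := by
    simpa [Function.comp_def] using hbc.comp_homeomorph (Homeomorph.inv G)
  have H : UniformContinuous fun x : G => b x⁻¹ :=
    hbc'.uniformContinuous_of_continuous hb'
  have hmem : {p : ℂ × ℂ | dist p.1 p.2 < ε} ∈ uniformity ℂ := Metric.dist_mem_uniformity hε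
  have h2 := H hmem
  rw [Filter.mem_map] at h2
  have h3 : (fun x : G × G => (b x.1⁻¹, b x.2⁻¹)) ⁻¹' {p : ℂ × ℂ | dist p.1 p.2 < ε} ∈
      Filter.comap (fun p : G × G => p.2 * p.1⁻¹) (nhds (1 : G)) := h2
  rw [Filter.mem_comap] at h3
  obtain ⟨U, hU, hUsub⟩ := h3
  refine ⟨U⁻¹, ?_, ?_⟩
  · have : ContinuousAt (fun x : G => x⁻¹) 1 := continuous_inv.continuousAt
    have := this.preimage_mem_nhds (by simpa using hU)
    exact this
  · intro x y hxy
    have hmemU : (x⁻¹, y⁻¹) ∈ (fun p : G × G => p.2 * p.1⁻¹) ⁻¹' U := by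
      have : y⁻¹ * x ∈ U := by simpa [Set.mem_inv] using hxy
      simpa [div_eq_mul_inv] using this
    have := hUsub hmemU
    simpa using this

private theorem conv_cont {G : Type*} [Group G] [TopologicalSpace G] [IsTopologicalGroup G]
    [LocallyCompactSpace G] [T2Space G] [MeasurableSpace G] [BorelSpace G]
    (μ : Measure G) [μ.IsHaarMeasure]
    (a b : G → ℂ) (ha : Continuous a) (hac : HasCompactSupport a)
    (hb : Continuous b) (hbc : HasCompactSupport b) :
    Continuous fun g => ∫ h, a h * b (h⁻¹ * g) ∂μ := by
  have hcont : ∀ g : G, Continuous fun h => a h * b (h⁻¹ * g) := fun g =>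
    ha.mul (hb.comp (continuous_inv.mul continuous_const))
  have hsupp : ∀ g : G, HasCompactSupport fun h => a h * b (h⁻¹ * g) := fun g =>
    hac.mono (fun h hh => by
      intro h0; exact hh (by simp [h0]))
  have hint : ∀ g : G, Integrable (fun h => a h * b (h⁻¹ * g)) μ := fun g =>
    (hcont g).integrable_of_hasCompactSupport (hsupp g)
  have haint : Integrable (fun h => ‖a h‖) μ :=
    ha.norm.integrable_of_hasCompactSupport hac.norm
  set I : ℝ := ∫ h, ‖a h‖ ∂μ with hI
  have hI0 : 0 ≤ I := integral_nonneg fun h => norm_nonneg _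
  rw [continuous_iff_continuousAt]
  intro g₀
  rw [ContinuousAt, Metric.tendsto_nhds]
  intro ε hε
  set ε' : ℝ := ε / (I + 1) with hε'def
  have hε' : 0 < ε' := div_pos hε (by linarith)
  obtain ⟨U, hU, hUb⟩ := key_unif b hb hbc hε'
  have hnhds : (fun g => g₀⁻¹ * g) ⁻¹' U ∈ nhds g₀ := by
    have : ContinuousAt (fun g : G => g₀⁻¹ * g) g₀ :=
      (continuous_const.mul continuous_id).continuousAt
    exact this.preimage_mem_nhds (by simpa using hU)
  filter_upwards [hnhds] with g hg
  have key : ∀ h : G, ‖a h * b (h⁻¹ * g) - a h * b (h⁻¹ * g₀)‖ ≤ ‖a h‖ * ε' := by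
    intro h
    have hd : dist (b (h⁻¹ * g₀)) (b (h⁻¹ * g)) < ε' := by
      apply hUb
      have : (h⁻¹ * g₀)⁻¹ * (h⁻¹ * g) = g₀⁻¹ * g := by group
      rw [this]; exact hg
    rw [← mul_sub, norm_mul]
    apply mul_le_mul_of_nonneg_left _ (norm_nonneg _)
    rw [dist_eq_norm, norm_sub_rev] at hd
    exact hd.le
  calc dist ((fun g => ∫ h, a h * b (h⁻¹ * g) ∂μ) g) ((fun g => ∫ h, a h * b (h⁻¹ * g) ∂μ) g₀)
      = ‖∫ h, (a h * b (h⁻¹ * g) - a h * b (h⁻¹ * g₀)) ∂μ‖ := by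
        rw [dist_eq_norm, ← integral_sub (hint g) (hint g₀)]
    _ ≤ ∫ h, ‖a h * b (h⁻¹ * g) - a h * b (h⁻¹ * g₀)‖ ∂μ := norm_integral_le_integral_norm _
    _ ≤ ∫ h, ‖a h‖ * ε' ∂μ := by
        apply integral_mono_of_nonneg (Filter.Eventually.of_forall fun h => norm_nonneg _)
          (haint.mul_const ε') (Filter.Eventually.of_forall key)
    _ = I * ε' := by rw [integral_mul_const]
    _ < (I + 1) * ε' := by nlinarith
    _ = ε := by rw [hε'def]; field_simp

private theorem conv_supp {G : Type*} [Group G] [TopologicalSpace G] [IsTopologicalGroup G]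
    [T2Space G] [MeasurableSpace G]
    (μ : Measure G)
    (a b : G → ℂ) (hac : HasCompactSupport a) (hbc : HasCompactSupport b) :
    HasCompactSupport fun g => ∫ h, a h * b (h⁻¹ * g) ∂μ := by
  apply HasCompactSupport.intro (IsCompact.mul hac hbc)
  intro g hg
  have hz : ∀ h, a h * b (h⁻¹ * g) = 0 := by
    intro h
    by_cases h1 : a h = 0
    · simp [h1]
    by_cases h2 : b (h⁻¹ * g) = 0
    · simp [h2]
    exact absurd (by simpa using Set.mul_mem_mul (subset_tsupport a h1) (subset_tsupport b h2))
      hg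
  simp only [hz, integral_zero]

/-- Given an unconditional submultiplicative norm `N` on `C_c(G)`, the twisted norm
`N^ρ(f) = N (g ↦ |f(g)| ‖ρ(g)‖)` is again submultiplicative for convolution, so that
`B^ρ(G)` is an unconditional completion of `C_c(G)`. -/
theorem stmt_5 {G : Type*} [Group G] [TopologicalSpace G] [IsTopologicalGroup G]
    [LocallyCompactSpace G] [T2Space G] [MeasurableSpace G] [BorelSpace G]
    {V : Type*} [NormedAddCommGroup V] [NormedSpace ℂ V] [FiniteDimensional ℂ V] [Nontrivial V]
    (ρ : G →* (V →L[ℂ] V)ˣ)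
    (hρ : Continuous fun g : G => (ρ g : V →L[ℂ] V))
    (μ : Measure G) [μ.IsHaarMeasure]
    (N : (G → ℂ) → ℝ)
    (hN0 : ∀ f : G → ℂ, Continuous f → HasCompactSupport f → 0 ≤ N f)
    (hNmono : ∀ f₁ f₂ : G → ℂ, Continuous f₁ → HasCompactSupport f₁ →
      Continuous f₂ → HasCompactSupport f₂ →
      (∀ g : G, ‖f₁ g‖ ≤ ‖f₂ g‖) → N f₁ ≤ N f₂)
    (hNsub : ∀ f₁ f₂ : G → ℂ, Continuous f₁ → HasCompactSupport f₁ →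
      Continuous f₂ → HasCompactSupport f₂ →
      N (fun g => ∫ h, f₁ h * f₂ (h⁻¹ * g) ∂μ) ≤ N f₁ * N f₂)
    (Nρ : (G → ℂ) → ℝ)
    (hNρ : ∀ f : G → ℂ, Nρ f = N (fun g => ((‖f g‖ * ‖(ρ g : V →L[ℂ] V)‖ : ℝ) : ℂ)))
    (f₁ f₂ : G → ℂ) (hf₁ : Continuous f₁) (hf₁c : HasCompactSupport f₁)
    (hf₂ : Continuous f₂) (hf₂c : HasCompactSupport f₂) :
    Nρ (fun g => ∫ h, f₁ h * f₂ (h⁻¹ * g) ∂μ) ≤ Nρ f₁ * Nρ f₂ := by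
  have hRc : Continuous fun g : G => ‖(ρ g : V →L[ℂ] V)‖ := hρ.norm
  set R : G → ℝ := fun g => ‖(ρ g : V →L[ℂ] V)‖ with hR
  have hRnn : ∀ g, 0 ≤ R g := fun g => norm_nonneg _
  have hRsub : ∀ g h : G, R g ≤ R h * R (h⁻¹ * g) := by
    intro g h
    have h1 : ρ g = ρ h * ρ (h⁻¹ * g) := by rw [← map_mul]; congr 1; group
    calc R g = ‖(ρ h : V →L[ℂ] V) * (ρ (h⁻¹ * g) : V →L[ℂ] V)‖ := by
          rw [hR]; simp only; rw [h1, Units.val_mul]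
      _ ≤ R h * R (h⁻¹ * g) := norm_mul_le _ _
  -- the twisted absolute-value functions
  set F₁ : G → ℂ := fun g => ((‖f₁ g‖ * R g : ℝ) : ℂ) with hF₁
  set F₂ : G → ℂ := fun g => ((‖f₂ g‖ * R g : ℝ) : ℂ) with hF₂
  have hF₁cont : Continuous F₁ := Complex.continuous_ofReal.comp (hf₁.norm.mul hRc)
  have hF₂cont : Continuous F₂ := Complex.continuous_ofReal.comp (hf₂.norm.mul hRc)
  have hF₁supp : HasCompactSupport F₁ := hf₁c.mono fun x hx => by
    intro h0; exact hx (by simp [hF₁, h0])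
  have hF₂supp : HasCompactSupport F₂ := hf₂c.mono fun x hx => by
    intro h0; exact hx (by simp [hF₂, h0])
  set c : G → ℂ := fun g => ∫ h, f₁ h * f₂ (h⁻¹ * g) ∂μ with hc
  have hccont : Continuous c := conv_cont μ f₁ f₂ hf₁ hf₁c hf₂ hf₂c
  have hcsupp : HasCompactSupport c := conv_supp μ f₁ f₂ hf₁c hf₂c
  set C : G → ℂ := fun g => ∫ h, F₁ h * F₂ (h⁻¹ * g) ∂μ with hC
  have hCcont : Continuous C := conv_cont μ F₁ F₂ hF₁cont hF₁supp hF₂cont hF₂supp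
  have hCsupp : HasCompactSupport C := conv_supp μ F₁ F₂ hF₁supp hF₂supp
  -- twisted convolution
  set T : G → ℂ := fun g => ((‖c g‖ * R g : ℝ) : ℂ) with hT
  have hTcont : Continuous T := Complex.continuous_ofReal.comp (hccont.norm.mul hRc)
  have hTsupp : HasCompactSupport T := hcsupp.mono fun x hx => by
    intro h0; exact hx (by simp [hT, h0])
  -- the key pointwise estimate
  have key : ∀ g : G, ‖T g‖ ≤ ‖C g‖ := by
    intro g
    have hint1 : Integrable (fun h => ‖f₁ h * f₂ (h⁻¹ * g)‖ * R g) μ := by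
      apply Continuous.integrable_of_hasCompactSupport
      · exact ((hf₁.mul (hf₂.comp (continuous_inv.mul continuous_const))).norm).mul
          continuous_const
      · apply hf₁c.mono fun x hx => ?_
        intro h0; exact hx (by simp [h0])
    have hint2 : Integrable (fun h => (‖f₁ h‖ * R h) * (‖f₂ (h⁻¹ * g)‖ * R (h⁻¹ * g))) μ := by
      apply Continuous.integrable_of_hasCompactSupport
      · exact (hf₁.norm.mul hRc).mul
          ((hf₂.norm.mul hRc).comp (continuous_inv.mul continuous_const))
      · apply hf₁c.mono fun x hx => ?_
        intro h0; exact hx (by simp [h0])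
    have hCg : C g = ((∫ h, (‖f₁ h‖ * R h) * (‖f₂ (h⁻¹ * g)‖ * R (h⁻¹ * g)) ∂μ : ℝ) : ℂ) := by
      rw [hC]
      simp only [hF₁, hF₂, ← Complex.ofReal_mul]
      exact integral_ofReal
    have hCnn : 0 ≤ ∫ h, (‖f₁ h‖ * R h) * (‖f₂ (h⁻¹ * g)‖ * R (h⁻¹ * g)) ∂μ :=
      integral_nonneg fun h => mul_nonneg (mul_nonneg (norm_nonneg _) (hRnn _))
        (mul_nonneg (norm_nonneg _) (hRnn _))
    have hTg : ‖T g‖ = ‖c g‖ * R g := by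
      rw [hT]
      simp only [Complex.norm_real, Real.norm_eq_abs]
      exact abs_of_nonneg (mul_nonneg (norm_nonneg _) (hRnn _))
    rw [hTg, hCg]
    rw [Complex.norm_real, Real.norm_eq_abs, abs_of_nonneg hCnn]
    calc ‖c g‖ * R g ≤ (∫ h, ‖f₁ h * f₂ (h⁻¹ * g)‖ ∂μ) * R g :=
          mul_le_mul_of_nonneg_right (norm_integral_le_integral_norm _) (hRnn g)
      _ = ∫ h, ‖f₁ h * f₂ (h⁻¹ * g)‖ * R g ∂μ := (integral_mul_const _ _).symm
      _ ≤ ∫ h, (‖f₁ h‖ * R h) * (‖f₂ (h⁻¹ * g)‖ * R (h⁻¹ * g)) ∂μ := by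
          apply integral_mono hint1 hint2
          intro h
          have h1 : ‖f₁ h * f₂ (h⁻¹ * g)‖ * R g
              ≤ ‖f₁ h‖ * ‖f₂ (h⁻¹ * g)‖ * (R h * R (h⁻¹ * g)) := by
            rw [norm_mul]
            exact mul_le_mul_of_nonneg_left (hRsub g h)
              (mul_nonneg (norm_nonneg _) (norm_nonneg _))
          calc ‖f₁ h * f₂ (h⁻¹ * g)‖ * R g
              ≤ ‖f₁ h‖ * ‖f₂ (h⁻¹ * g)‖ * (R h * R (h⁻¹ * g)) := h1
            _ = (‖f₁ h‖ * R h) * (‖f₂ (h⁻¹ * g)‖ * R (h⁻¹ * g)) := by ring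
  calc Nρ c = N T := by rw [hNρ]
    _ ≤ N C := hNmono T C hTcont hTsupp hCcont hCsupp key
    _ ≤ N F₁ * N F₂ := hNsub F₁ F₂ hF₁cont hF₁supp hF₂cont hF₂supp
    _ = Nρ f₁ * Nρ f₂ := by rw [hNρ f₁, hNρ f₂]
end

section
/- There exists a continuous compactly supported function c : X → [0, ∞) such that ∫_G c(g⁻¹ · x) dμ(g) = 1 for every x ∈ X. -/
open MeasureTheory Set

section aux
variable {G X : Type*} [Group G] [TopologicalSpace G] [TopologicalSpace X]
  [MulAction G X] [ProperSMul G X]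

lemma aux_compact [IsTopologicalGroup G] {S V : Set X} (hS : IsCompact S) (hV : IsCompact V) :
    IsCompact {g : G | ∃ x ∈ V, g⁻¹ • x ∈ S} := by
  have h := ProperSMul.isProperMap_smul_pair (G := G) (X := X)
  have hc : IsCompact ((fun gx : G × X ↦ (gx.1 • gx.2, gx.2)) ⁻¹' (S ×ˢ V)) :=
    h.isCompact_preimage (hS.prod hV)
  have himg : IsCompact (Prod.fst '' ((fun gx : G × X ↦ (gx.1 • gx.2, gx.2)) ⁻¹' (S ×ˢ V))) :=
    hc.image continuous_fst
  have hinv : IsCompact ((Prod.fst '' ((fun gx : G × X ↦ (gx.1 • gx.2, gx.2)) ⁻¹' (S ×ˢ V)))⁻¹) :=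
    himg.inv
  convert hinv using 1
  ext g
  constructor
  · rintro ⟨x, hxV, hxS⟩
    exact Set.mem_inv.2 ⟨(g⁻¹, x), ⟨hxS, hxV⟩, rfl⟩
  · intro hg
    obtain ⟨⟨h', x⟩, ⟨hxS, hxV⟩, heq⟩ := Set.mem_inv.1 hg
    rw [show h' = g⁻¹ from heq] at hxS
    exact ⟨x, hxV, hxS⟩

end aux

/-- If `G` acts continuously and properly on a nonempty locally compact Hausdorff space `X`
with compact orbit space, then there exists a continuous compactly supported cutoff function
`c : X → [0, ∞)` with `∫_G c(g⁻¹ • x) dμ(g) = 1` for every `x ∈ X`. -/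
theorem stmt_9 {G : Type*} [Group G] [TopologicalSpace G] [IsTopologicalGroup G]
    [LocallyCompactSpace G] [T2Space G] [MeasurableSpace G] [BorelSpace G]
    (μ : Measure G) [μ.IsHaarMeasure]
    (X : Type*) [Nonempty X] [TopologicalSpace X] [LocallyCompactSpace X] [T2Space X]
    [MulAction G X] [ContinuousSMul G X] [ProperSMul G X]
    [CompactSpace (Quotient (MulAction.orbitRel G X))] :
    ∃ c : X → ℝ, Continuous c ∧ HasCompactSupport c ∧ (∀ x : X, 0 ≤ c x) ∧
      ∀ x : X, ∫ g : G, c (g⁻¹ • x) ∂μ = 1 := by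
  classical
  -- Step 1: a compact set K meeting every orbit
  obtain ⟨K, hKcomp, hKorb⟩ : ∃ K : Set X, IsCompact K ∧ ∀ x : X, ∃ g : G, g⁻¹ • x ∈ K := by
    choose V hVc hVn using fun x : X => exists_compact_mem_nhds x
    have ho := MulAction.isOpenQuotientMap_quotientMk (Γ := G) (T := X)
    set π : X → Quotient (MulAction.orbitRel G X) := Quotient.mk (MulAction.orbitRel G X)
      with hπdef
    have hcov : univ ⊆ ⋃ x : X, π '' interior (V x) := by
      intro q _
      obtain ⟨x, rfl⟩ := ho.surjective q
      exact Set.mem_iUnion.2 ⟨x, ⟨x, mem_interior_iff_mem_nhds.2 (hVn x), rfl⟩⟩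
    obtain ⟨s, hs⟩ := isCompact_univ.elim_finite_subcover (fun x => π '' interior (V x))
      (fun x => ho.isOpenMap _ isOpen_interior) hcov
    refine ⟨⋃ x ∈ s, V x, s.isCompact_biUnion (fun x _ => hVc x), fun x => ?_⟩
    have := hs (Set.mem_univ (π x))
    obtain ⟨i, hi, y, hy, hyx⟩ := by
      simpa only [Set.mem_iUnion, Set.mem_image, exists_prop] using this
    have hyo : y ∈ MulAction.orbit G x := by
      have := Quotient.eq.1 hyx
      rwa [MulAction.orbitRel_apply] at this
    obtain ⟨g, hg⟩ := MulAction.mem_orbit_iff.1 hyo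
    refine ⟨g⁻¹, ?_⟩
    have : g⁻¹⁻¹ • x = y := by rw [inv_inv]; exact hg
    rw [this]
    exact Set.mem_biUnion hi (interior_subset hy)
  -- Step 2: cutoff function f equal to 1 on K
  obtain ⟨f, hf1, -, hfc, hf01⟩ :=
    exists_continuous_one_zero_of_isCompact hKcomp isClosed_empty (Set.disjoint_empty _)
  have hf0 : ∀ x, 0 ≤ f x := fun x => (hf01 x).1
  have hfle : ∀ x, f x ≤ 1 := fun x => (hf01 x).2
  -- Integrability of g ↦ f (g⁻¹ • x)
  have hcont_slice : ∀ x : X, Continuous fun g : G => f (g⁻¹ • x) :=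
    fun x => f.continuous.comp (continuous_inv.smul continuous_const)
  have hsupp_slice : ∀ x : X, HasCompactSupport fun g : G => f (g⁻¹ • x) := by
    intro x
    apply HasCompactSupport.intro (aux_compact hfc (isCompact_singleton (x := x)))
    intro g hg
    simp only [Set.mem_setOf_eq, Set.mem_singleton_iff] at hg
    push_neg at hg
    exact image_eq_zero_of_notMem_tsupport (hg x rfl)
  have hint_slice : ∀ x : X, Integrable (fun g : G => f (g⁻¹ • x)) μ :=
    fun x => (hcont_slice x).integrable_of_hasCompactSupport (hsupp_slice x)
  set F : X → ℝ := fun x => ∫ g : G, f (g⁻¹ • x) ∂μ with hFdef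
  -- invariance
  have hFinv : ∀ (h : G) (x : X), F (h • x) = F x := by
    intro h x
    have := integral_mul_left_eq_self (μ := μ) (fun g : G => f (g⁻¹ • x)) h⁻¹
    calc F (h • x) = ∫ g : G, f ((h⁻¹ * g)⁻¹ • x) ∂μ := by
          simp only [hFdef, mul_inv_rev, inv_inv, mul_smul]
      _ = ∫ g : G, f (g⁻¹ • x) ∂μ := this
      _ = F x := rfl
  -- positivity
  have hFpos : ∀ x : X, 0 < F x := by
    intro x
    rw [hFdef, integral_pos_iff_support_of_nonneg (fun g => hf0 _) (hint_slice x)]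
    obtain ⟨g₀, hg₀⟩ := hKorb x
    have hopen : IsOpen (Function.support fun g : G => f (g⁻¹ • x)) :=
      (hcont_slice x).isOpen_support
    have hne : (Function.support fun g : G => f (g⁻¹ • x)).Nonempty := by
      refine ⟨g₀, ?_⟩
      simp only [Function.mem_support]
      rw [hf1 hg₀]
      norm_num
    exact hopen.measure_pos μ hne
  -- continuity of F
  have hFcont : Continuous F := by
    rw [continuous_iff_continuousAt]
    intro x₀
    obtain ⟨V, hVc, hVn⟩ := exists_compact_mem_nhds x₀
    set T : Set G := {g : G | ∃ x ∈ V, g⁻¹ • x ∈ tsupport f} with hTdef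
    have hTc : IsCompact T := aux_compact hfc hVc
    have hconts : Continuous (Function.uncurry fun (x : X) (g : G) => f (g⁻¹ • x)) := by
      apply f.continuous.comp
      exact (continuous_inv.comp continuous_snd).smul continuous_fst
    have : ContinuousOn F V := by
      apply continuousOn_integral_of_compact_support hTc hconts.continuousOn
      intro x g hx hg
      have : g⁻¹ • x ∉ tsupport f := fun h => hg ⟨x, hx, h⟩
      exact image_eq_zero_of_notMem_tsupport this
    exact this.continuousAt hVn
  -- the cutoff
  refine ⟨fun x => f x / F x, f.continuous.div hFcont (fun x => (hFpos x).ne'),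
    HasCompactSupport.intro hfc (fun x hx => by rw [image_eq_zero_of_notMem_tsupport hx, zero_div]),
    fun x => div_nonneg (hf0 x) (hFpos x).le, fun x => ?_⟩
  have : (fun g : G => f (g⁻¹ • x) / F (g⁻¹ • x)) = fun g : G => f (g⁻¹ • x) / F x := by
    funext g; rw [hFinv g⁻¹ x]
  rw [this, integral_div, div_self (hFpos x).ne']
end

section
/- For all g ∈ G and x ∈ X, ∫_G p(g₁, x)·p(g₁⁻¹g, g₁⁻¹ · x) dμ(g₁) = p(g, x); that is, p is an idempotent for the convolution product of the algebra C_c(G, C₀(X)). -/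
open MeasureTheory

/-- If `c : X → [0, ∞)` is a continuous compactly supported cutoff function with
`∫_G c(g⁻¹ • x) dμ(g) = 1` for all `x`, then `p(g, x) = √(c(x) c(g⁻¹ • x))` is an idempotent
for the convolution product of `C_c(G, C₀(X))`:
`∫_G p(g₁, x) p(g₁⁻¹ g, g₁⁻¹ • x) dμ(g₁) = p(g, x)`. -/
theorem stmt_12 {G : Type*} [Group G] [TopologicalSpace G] [IsTopologicalGroup G]
    [LocallyCompactSpace G] [T2Space G] [MeasurableSpace G] [BorelSpace G]
    (μ : Measure G) [μ.IsHaarMeasure]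
    (X : Type*) [TopologicalSpace X] [LocallyCompactSpace X] [T2Space X]
    [MulAction G X] [ContinuousSMul G X] [ProperSMul G X]
    (c : X → ℝ) (hc : Continuous c) (hcc : HasCompactSupport c) (hc0 : ∀ x : X, 0 ≤ c x)
    (hc1 : ∀ x : X, ∫ g : G, c (g⁻¹ • x) ∂μ = 1)
    (p : G → X → ℝ) (hp : ∀ (g : G) (x : X), p g x = Real.sqrt (c x * c (g⁻¹ • x)))
    (g : G) (x : X) :
    ∫ g₁ : G, p g₁ x * p (g₁⁻¹ * g) (g₁⁻¹ • x) ∂μ = p g x := by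
  have key : ∀ g₁ : G, p g₁ x * p (g₁⁻¹ * g) (g₁⁻¹ • x)
      = Real.sqrt (c x * c (g⁻¹ • x)) * c (g₁⁻¹ • x) := by
    intro g₁
    rw [hp, hp]
    have hs : (g₁⁻¹ * g)⁻¹ • g₁⁻¹ • x = g⁻¹ • x := by
      rw [smul_smul]; congr 1; group
    rw [hs, Real.sqrt_mul (hc0 x), Real.sqrt_mul (hc0 _), Real.sqrt_mul (hc0 x)]
    have h2 := Real.sq_sqrt (hc0 (g₁⁻¹ • x))
    linear_combination Real.sqrt (c x) * Real.sqrt (c (g⁻¹ • x)) * h2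
  simp_rw [key]
  rw [integral_const_mul, hc1, mul_one, hp]
end
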